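/- The Local Price of Anarchy of local 2-type Swap Schelling Games on Δ-regular graphs, where Δ = 2α + β with α ≥ 1 and β ∈ {0,1}, is at most 2 + 1/α. Equivalently, in any local swap equilibrium on a Δ-regular graph the average utility of an agent is at least α/(2α+1). -/

import Mathlib

open SimpleGraph Finset
open scoped Classical

noncomputable def ssgUtil {V A : Type*} [Fintype V] [DecidableEq V]
    (G : SimpleGraph V) [DecidableRel G.Adj]
    {k : ℕ} (c : A → Fin k) (σ : A ≃ V) (i : A) : ℚ :=
  (((G.neighborFinset (σ i)).filter (fun v => c (σ.symm v) = c i)).card : ℚ) /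
    (G.degree (σ i) : ℚ)

def ssgSwap {V A : Type*} [DecidableEq V] (σ : A ≃ V) (i j : A) : A ≃ V :=
  σ.trans (Equiv.swap (σ i) (σ j))

def ssgProfitable {V A : Type*} [Fintype V] [DecidableEq V]
    (G : SimpleGraph V) [DecidableRel G.Adj]
    {k : ℕ} (c : A → Fin k) (σ : A ≃ V) (i j : A) : Prop :=
  c i ≠ c j ∧
    ssgUtil G c σ i < ssgUtil G c (ssgSwap σ i j) i ∧
    ssgUtil G c σ j < ssgUtil G c (ssgSwap σ i j) j

def ssgEquilibrium {V A : Type*} [Fintype V] [DecidableEq V]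
    (G : SimpleGraph V) [DecidableRel G.Adj]
    {k : ℕ} (c : A → Fin k) (σ : A ≃ V) : Prop :=
  ∀ i j : A, ¬ ssgProfitable G c σ i j

def ssgLocalEquilibrium {V A : Type*} [Fintype V] [DecidableEq V]
    (G : SimpleGraph V) [DecidableRel G.Adj]
    {k : ℕ} (c : A → Fin k) (σ : A ≃ V) : Prop :=
  ∀ i j : A, G.Adj (σ i) (σ j) → ¬ ssgProfitable G c σ i j

noncomputable def ssgWelfare {V A : Type*} [Fintype V] [DecidableEq V] [Fintype A]
    (G : SimpleGraph V) [DecidableRel G.Adj]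
    {k : ℕ} (c : A → Fin k) (σ : A ≃ V) : ℚ :=
  ∑ i : A, ssgUtil G c σ i

noncomputable def ssgPhi {V A : Type*} [Fintype V] [DecidableEq V]
    (G : SimpleGraph V) [DecidableRel G.Adj]
    {k : ℕ} (c : A → Fin k) (σ : A ≃ V) : ℕ :=
  (G.edgeFinset.filter (fun e => ∀ u ∈ e, ∀ v ∈ e, c (σ.symm u) = c (σ.symm v))).card


section Aux

variable {V A : Type*} [Fintype V] [DecidableEq V]

noncomputable def dCnt (G : SimpleGraph V) [DecidableRel G.Adj]
    (c : A → Fin 2) (σ : A ≃ V) (v : V) : ℕ :=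
  ((G.neighborFinset v).filter (fun w => ¬ c (σ.symm w) = c (σ.symm v))).card

lemma fin2_eq_iff : ∀ (a b x : Fin 2), a ≠ b → (x = a ↔ ¬ x = b) := by decide

variable (G : SimpleGraph V) [DecidableRel G.Adj] (c : A → Fin 2) (σ : A ≃ V)

lemma dCnt_le (v : V) : dCnt G c σ v ≤ G.degree v :=
  Finset.card_filter_le _ _

lemma scard_eq (v : V) :
    ((G.neighborFinset v).filter (fun w => c (σ.symm w) = c (σ.symm v))).card
      = G.degree v - dCnt G c σ v := by
  have h := Finset.card_filter_add_card_filter_not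
    (s := G.neighborFinset v) (p := fun w => c (σ.symm w) = c (σ.symm v))
  have h2 : (G.neighborFinset v).card = G.degree v := rfl
  unfold dCnt
  omega

lemma util_old (u : V) :
    ssgUtil G c σ (σ.symm u)
      = ((G.degree u - dCnt G c σ u : ℕ) : ℚ) / (G.degree u : ℚ) := by
  unfold ssgUtil
  rw [Equiv.apply_symm_apply, scard_eq]

lemma ssgSwap_comm (σ : A ≃ V) (i j : A) : ssgSwap σ i j = ssgSwap σ j i := by
  unfold ssgSwap; rw [Equiv.swap_comm]

lemma util_swap {u v : V} (huv : G.Adj u v) (hcol : c (σ.symm u) ≠ c (σ.symm v)) :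
    ssgUtil G c (ssgSwap σ (σ.symm u) (σ.symm v)) (σ.symm u)
      = ((dCnt G c σ v - 1 : ℕ) : ℚ) / (G.degree v : ℚ) := by
  have h1 : σ (σ.symm u) = u := Equiv.apply_symm_apply σ u
  have h2 : σ (σ.symm v) = v := Equiv.apply_symm_apply σ v
  have hs : ssgSwap σ (σ.symm u) (σ.symm v) = σ.trans (Equiv.swap u v) := by
    simp [ssgSwap, h1, h2]
  rw [hs]
  unfold ssgUtil
  rw [show (σ.trans (Equiv.swap u v)) (σ.symm u) = v by simp [h1]]
  show (((G.neighborFinset v).filter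
    (fun w => c (σ.symm (Equiv.swap u v w)) = c (σ.symm u))).card : ℚ) / (G.degree v : ℚ) = _
  have hfil : (G.neighborFinset v).filter
        (fun w => c (σ.symm (Equiv.swap u v w)) = c (σ.symm u))
      = ((G.neighborFinset v).filter (fun w => ¬ c (σ.symm w) = c (σ.symm v))).erase u := by
    ext w
    simp only [mem_filter, mem_erase, SimpleGraph.mem_neighborFinset]
    by_cases hwu : w = u
    · subst hwu
      simp [Equiv.swap_apply_left, (Ne.symm hcol)]
    · by_cases hwv : w = v
      · subst hwv
        simp [G.irrefl]
      · rw [Equiv.swap_apply_of_ne_of_ne hwu hwv]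
        have h3 := fin2_eq_iff (c (σ.symm u)) (c (σ.symm v)) (c (σ.symm w)) hcol
        tauto
  rw [hfil, Finset.card_erase_of_mem]
  · rfl
  · simp [SimpleGraph.mem_neighborFinset, huv.symm, hcol]

lemma key {Δ : ℕ} (hreg : G.IsRegularOfDegree Δ)
    (heq : ∀ i j : A, G.Adj (σ i) (σ j) → ¬ (c i ≠ c j ∧
      ssgUtil G c σ i < ssgUtil G c (ssgSwap σ i j) i ∧
      ssgUtil G c σ j < ssgUtil G c (ssgSwap σ i j) j))
    {u v : V} (huv : G.Adj u v) (hcol : c (σ.symm u) ≠ c (σ.symm v)) :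
    dCnt G c σ u + dCnt G c σ v ≤ Δ + 1 := by
  have hΔpos : 0 < Δ := by
    have h := hreg u
    have : 0 < G.degree u := by
      rw [← SimpleGraph.card_neighborFinset_eq_degree]
      exact Finset.card_pos.mpr ⟨v, by simp [SimpleGraph.mem_neighborFinset, huv]⟩
    omega
  have hQ : (0:ℚ) < (Δ : ℚ) := by exact_mod_cast hΔpos
  have hu_le : dCnt G c σ u ≤ Δ := (hreg u) ▸ dCnt_le G c σ u
  have hv_le : dCnt G c σ v ≤ Δ := (hreg v) ▸ dCnt_le G c σ v
  have hu_pos : 1 ≤ dCnt G c σ u := by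
    apply Finset.card_pos.mpr
    exact ⟨v, by simp [SimpleGraph.mem_neighborFinset, huv, Ne.symm hcol]⟩
  have hv_pos : 1 ≤ dCnt G c σ v := by
    apply Finset.card_pos.mpr
    exact ⟨u, by simp [SimpleGraph.mem_neighborFinset, huv.symm, hcol]⟩
  have hadj' : G.Adj (σ (σ.symm u)) (σ (σ.symm v)) := by simpa using huv
  have hne := heq _ _ hadj'
  push_neg at hne
  have hne2 := hne hcol
  by_cases hlt : ssgUtil G c σ (σ.symm u) <
      ssgUtil G c (ssgSwap σ (σ.symm u) (σ.symm v)) (σ.symm u)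
  · have hle := hne2 hlt
    rw [ssgSwap_comm, util_swap G c σ huv.symm (Ne.symm hcol), util_old,
      hreg u, hreg v, div_le_div_iff_of_pos_right hQ] at hle
    have : (dCnt G c σ u - 1 : ℕ) ≤ (Δ - dCnt G c σ v : ℕ) := by exact_mod_cast hle
    omega
  · rw [util_swap G c σ huv hcol, util_old, hreg u, hreg v, not_lt,
      div_le_div_iff_of_pos_right hQ] at hlt
    have : (dCnt G c σ v - 1 : ℕ) ≤ (Δ - dCnt G c σ u : ℕ) := by exact_mod_cast hlt
    omega

end Aux


section Count

variable {V : Type*} [Fintype V] [DecidableEq V]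

lemma sum_exchange {M : Type*} [AddCommMonoid M] (F : V → Finset V)
    (hsym : ∀ x y : V, y ∈ F x ↔ x ∈ F y) (g : V → V → M) :
    ∑ x : V, ∑ y ∈ F x, g x y = ∑ y : V, ∑ x ∈ F y, g x y := by
  have h1 : ∀ (x : V) (h : V → M), ∑ y ∈ F x, h y = ∑ y : V, if y ∈ F x then h y else 0 := by
    intro x h
    rw [← Finset.sum_filter, Finset.filter_univ_mem]
  rw [Finset.sum_congr rfl (fun x _ => h1 x (g x)), Finset.sum_comm]
  refine Finset.sum_congr rfl (fun y _ => ?_)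
  rw [h1 y (fun x => g x y)]
  refine Finset.sum_congr rfl (fun x _ => ?_)
  simp only [hsym x y]

lemma ptwiseZ (x a b : ℤ) (hb : b = 0 ∨ b = 1) :
    (2*a+b+1)*x ≤ x*x + (a+b)*(a+1) := by
  rcases hb with hb | hb <;> subst hb
  · rcases le_or_gt x a with h | h
    · nlinarith
    · have : a + 1 ≤ x := h
      nlinarith
  · nlinarith [mul_self_nonneg (x - (a+1))]

lemma ptwiseN (x a b : ℕ) (hb : b ≤ 1) :
    (2*a+b+1)*x ≤ x*x + (a+b)*(a+1) := by
  zify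
  exact ptwiseZ x a b (by omega)

end Count

theorem stmt12 {V A : Type*} [Fintype V] [DecidableEq V] [Fintype A]
    (G : SimpleGraph V) [DecidableRel G.Adj] (hconn : G.Connected)
    (α β : ℕ) (hα : 1 ≤ α) (hβ : β ≤ 1)
    (hreg : G.IsRegularOfDegree (2 * α + β))
    (c : A → Fin 2) (σ : A ≃ V) (heq : ssgLocalEquilibrium G c σ) :
    (Fintype.card A : ℚ) * ((α : ℚ) / (2 * (α : ℚ) + 1)) ≤ ssgWelfare G c σ ∧
    ∀ σ' : A ≃ V,
      ssgWelfare G c σ' ≤ (2 + 1 / (α : ℚ)) * ssgWelfare G c σ := by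
  set Δ : ℕ := 2 * α + β with hΔdef
  have hΔpos : 0 < Δ := by omega
  have hΔQ : (0:ℚ) < (Δ:ℚ) := by exact_mod_cast hΔpos
  set d : V → ℕ := dCnt G c σ with hd
  set F : V → Finset V :=
    fun v => (G.neighborFinset v).filter (fun w => ¬ c (σ.symm w) = c (σ.symm v)) with hF
  have hFd : ∀ v, (F v).card = d v := fun v => rfl
  have hmem : ∀ x y : V, y ∈ F x ↔ (G.Adj x y ∧ ¬ c (σ.symm y) = c (σ.symm x)) := by
    intro x y
    simp [hF, SimpleGraph.mem_neighborFinset]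
  have hsym : ∀ x y : V, y ∈ F x ↔ x ∈ F y := by
    intro x y
    rw [hmem, hmem]
    constructor
    · rintro ⟨h1, h2⟩; exact ⟨h1.symm, fun h => h2 h.symm⟩
    · rintro ⟨h1, h2⟩; exact ⟨h1.symm, fun h => h2 h.symm⟩
  set S : ℕ := ∑ v : V, d v with hS
  set T : ℕ := ∑ v : V, d v * d v with hT
  -- key local inequality
  have hkey : ∀ x y : V, y ∈ F x → d x + d y ≤ Δ + 1 := by
    intro x y hy
    rw [hmem] at hy
    exact key G c σ hreg heq hy.1 (Ne.symm hy.2)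
  -- double counting
  have hswap : ∑ x : V, ∑ y ∈ F x, d y = T := by
    rw [sum_exchange F hsym]
    simp only [Finset.sum_const, smul_eq_mul, hT]
    exact Finset.sum_congr rfl (fun y _ => by rw [hFd])
  have hdiag : ∀ x : V, ∑ y ∈ F x, d x = d x * d x := by
    intro x
    rw [Finset.sum_const, smul_eq_mul, hFd, mul_comm]
  have hB : 2 * T ≤ (Δ + 1) * S := by
    have h1 : ∑ x : V, ∑ y ∈ F x, (d x + d y) ≤ ∑ x : V, ∑ y ∈ F x, (Δ + 1) := by
      refine Finset.sum_le_sum (fun x _ => Finset.sum_le_sum (fun y hy => hkey x y hy))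
    have h2 : ∑ x : V, ∑ y ∈ F x, (d x + d y) = 2 * T := by
      have : ∀ x : V, ∑ y ∈ F x, (d x + d y) = d x * d x + ∑ y ∈ F x, d y := by
        intro x
        rw [Finset.sum_add_distrib, hdiag]
      rw [Finset.sum_congr rfl (fun x _ => this x), Finset.sum_add_distrib, hswap, hT,
        two_mul]
    have h3 : ∑ x : V, ∑ y ∈ F x, (Δ + 1) = (Δ + 1) * S := by
      have : ∀ x : V, ∑ y ∈ F x, (Δ + 1) = (Δ + 1) * d x := by
        intro x
        rw [Finset.sum_const, smul_eq_mul, hFd, mul_comm]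
      rw [Finset.sum_congr rfl (fun x _ => this x), ← Finset.mul_sum]
    rw [← h2, ← h3]; exact h1
  -- pointwise quadratic bound, summed
  have hC : (Δ + 1) * S ≤ T + Fintype.card V * ((α + β) * (α + 1)) := by
    have h1 : ∀ v : V, (Δ + 1) * d v ≤ d v * d v + (α + β) * (α + 1) := by
      intro v
      have := ptwiseN (d v) α β hβ
      calc (Δ + 1) * d v = (2*α+β+1) * d v := by rw [hΔdef]
        _ ≤ _ := this
    calc (Δ + 1) * S = ∑ v : V, (Δ + 1) * d v := by rw [hS, Finset.mul_sum]
      _ ≤ ∑ v : V, (d v * d v + (α + β) * (α + 1)) := Finset.sum_le_sum (fun v _ => h1 v)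
      _ = T + Fintype.card V * ((α + β) * (α + 1)) := by
          rw [Finset.sum_add_distrib, Finset.sum_const, smul_eq_mul, Finset.card_univ, hT]
  have hmain : (Δ + 1) * S ≤ 2 * (Fintype.card V * ((α + β) * (α + 1))) := by linarith
  -- final nat inequality
  have hfin : (2*α+1) * S ≤ Fintype.card V * ((2*α+β) * (α+1)) := by
    interval_cases β
    · calc (2*α+1) * S = (Δ + 1) * S := by rw [hΔdef]
        _ ≤ 2 * (Fintype.card V * ((α + 0) * (α + 1))) := hmain
        _ = Fintype.card V * ((2*α+0) * (α+1)) := by ring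
    · have h2 : (2*(α+1)) * S ≤ (2*(α+1)) * (Fintype.card V * (α+1)) := by
        calc (2*(α+1)) * S = (Δ + 1) * S := by rw [hΔdef]; ring_nf
          _ ≤ 2 * (Fintype.card V * ((α + 1) * (α + 1))) := hmain
          _ = (2*(α+1)) * (Fintype.card V * (α+1)) := by ring
      have hSle : S ≤ Fintype.card V * (α+1) := Nat.le_of_mul_le_mul_left h2 (by omega)
      calc (2*α+1) * S ≤ (2*α+1) * (Fintype.card V * (α+1)) :=
            Nat.mul_le_mul_left _ hSle
        _ = Fintype.card V * ((2*α+1) * (α+1)) := by ring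
  -- welfare formula
  have hd_le : ∀ v : V, d v ≤ Δ := fun v => (hreg v) ▸ dCnt_le G c σ v
  have hutil : ∀ i : A, ssgUtil G c σ i = ((Δ - d (σ i) : ℕ) : ℚ) / (Δ : ℚ) := by
    intro i
    have h := util_old G c σ (σ i)
    rw [Equiv.symm_apply_apply] at h
    rw [h, hreg (σ i)]
  have hwelf : ssgWelfare G c σ = ((Fintype.card V : ℚ) * Δ - S) / Δ := by
    unfold ssgWelfare
    rw [Finset.sum_congr rfl (fun i _ => hutil i),
      Equiv.sum_comp σ (fun v => ((Δ - d v : ℕ) : ℚ) / (Δ : ℚ)), ← Finset.sum_div]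
    congr 1
    rw [Finset.sum_congr rfl (fun v _ => by rw [Nat.cast_sub (hd_le v)]),
      Finset.sum_sub_distrib, Finset.sum_const, Finset.card_univ, nsmul_eq_mul, hS]
    push_cast
    ring
  have hcard : Fintype.card A = Fintype.card V := Fintype.card_congr σ
  -- part 1
  have part1 : (Fintype.card A : ℚ) * ((α : ℚ) / (2 * (α : ℚ) + 1)) ≤ ssgWelfare G c σ := by
    rw [hcard, hwelf]
    have hden : (0:ℚ) < 2 * (α:ℚ) + 1 := by positivity
    rw [← mul_div_assoc, div_le_div_iff₀ hden hΔQ]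
    have hfinQ : ((2*α+1 : ℕ):ℚ) * (S:ℚ) ≤ (Fintype.card V : ℚ) * (((2*α+β : ℕ)) * ((α:ℚ)+1)) := by
      exact_mod_cast hfin
    have hΔcast : (Δ:ℚ) = 2*(α:ℚ)+(β:ℚ) := by rw [hΔdef]; push_cast; ring
    push_cast at hfinQ
    rw [hΔcast]
    nlinarith [hfinQ]
  refine ⟨part1, fun σ' => ?_⟩
  -- part 2
  have hn : ssgWelfare G c σ' ≤ (Fintype.card A : ℚ) := by
    unfold ssgWelfare
    calc ∑ i : A, ssgUtil G c σ' i ≤ ∑ _i : A, (1:ℚ) := by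
          refine Finset.sum_le_sum (fun i _ => ?_)
          unfold ssgUtil
          rw [div_le_one (by rw [hreg (σ' i)]; exact hΔQ)]
          exact_mod_cast Nat.cast_le.mpr (Finset.card_filter_le _ _)
        _ = (Fintype.card A : ℚ) := by simp
  have hαQ : (0:ℚ) < (α:ℚ) := by exact_mod_cast hα
  have hfact : (Fintype.card A : ℚ)
      = (2 + 1/(α:ℚ)) * ((Fintype.card A : ℚ) * ((α : ℚ) / (2 * (α : ℚ) + 1))) := by
    field_simp
  calc ssgWelfare G c σ' ≤ (Fintype.card A : ℚ) := hn
    _ = (2 + 1/(α:ℚ)) * ((Fintype.card A : ℚ) * ((α : ℚ) / (2 * (α : ℚ) + 1))) := hfact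
    _ ≤ (2 + 1/(α:ℚ)) * ssgWelfare G c σ := by
        refine mul_le_mul_of_nonneg_left part1 (by positivity)
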